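/- Let A = { [a(n,k)] · [w(n,k)] : n,k ≥ 2 } ⊆ π₁(HE,p) and let M : π₁(HE,p) × π₁(HE,p) → π₁(HE,p) be concatenation multiplication. Then M^{-1}(A) is not closed in π₁(HE,p) × π₁(HE,p): the point ([P],[P]) lies in the closure of M^{-1}(A) but not in M^{-1}(A). -/

import Mathlib

open unitInterval

noncomputable section

/-- The `n`-th circle of the Hawaiian earring: the circle of radius `1/n`
centered at `(1/n, 0)` in the plane. -/
def heCircle (n : ℕ) : Set (ℝ × ℝ) :=
  {z : ℝ × ℝ | (z.1 - 1 / (n : ℝ)) ^ 2 + z.2 ^ 2 = (1 / (n : ℝ)) ^ 2}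

/-- The Hawaiian earring `HE = ⋃_{n ≥ 1} X_n`. -/
def HEset : Set (ℝ × ℝ) := ⋃ n : ℕ, ⋃ _ : 1 ≤ n, heCircle n

lemma origin_mem_HEset : ((0, 0) : ℝ × ℝ) ∈ HEset := by
  refine Set.mem_iUnion.2 ⟨1, Set.mem_iUnion.2 ⟨le_refl 1, ?_⟩⟩
  simp [heCircle]

/-- The basepoint `p = (0,0)` of the Hawaiian earring. -/
def hep : HEset := ⟨(0, 0), origin_mem_HEset⟩

/-- The point of the `n`-th circle at (counterclockwise) angle `θ` from the basepoint. -/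
def circlePt (n : ℕ) (θ : ℝ) : ℝ × ℝ :=
  (1 / (n : ℝ) - Real.cos θ / n, -(Real.sin θ / n))

lemma circlePt_mem (n : ℕ) (θ : ℝ) : circlePt n θ ∈ HEset := by
  rcases Nat.eq_zero_or_pos n with h | h
  · subst h
    simpa [circlePt] using origin_mem_HEset
  · refine Set.mem_iUnion.2 ⟨n, Set.mem_iUnion.2 ⟨h, ?_⟩⟩
    have hn : (n : ℝ) ≠ 0 := Nat.cast_ne_zero.2 h.ne'
    have hsc := Real.sin_sq_add_cos_sq θ
    simp only [heCircle, circlePt, Set.mem_setOf_eq]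
    field_simp
    linarith [hsc]

/-- The standard loop `x_n` traversing the `n`-th circle of the Hawaiian earring
once counterclockwise.  (For `n = 0` this degenerates to the constant loop at `p`.) -/
def xLoop (n : ℕ) : Path hep hep where
  toFun := fun τ => ⟨circlePt n (2 * Real.pi * τ), circlePt_mem n _⟩
  continuous_toFun := by
    apply Continuous.subtype_mk
    have h1 : Continuous fun θ : ℝ => circlePt n θ := by
      unfold circlePt; fun_prop
    exact h1.comp (by fun_prop)
  source' := by
    apply Subtype.ext
    simp [circlePt, hep]
  target' := by
    apply Subtype.ext
    simp [circlePt, hep, Real.cos_two_pi, Real.sin_two_pi]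

attribute [local instance] Path.Homotopic.setoid

/-- The loop corresponding to a single letter `x_n` (if the Bool is `true`)
or `x_n⁻¹` (if the Bool is `false`). -/
def heLetter (l : ℕ × Bool) : Path hep hep :=
  if l.2 then xLoop l.1 else (xLoop l.1).symm

/-- The based loop corresponding to a finite word in the letters `x_n^{±1}`,
obtained by concatenating the letter loops. -/
def wordLoop (L : List (ℕ × Bool)) : Path hep hep :=
  L.foldr (fun l acc => (heLetter l).trans acc) (Path.refl hep)

/-- The word `x_n x_k x_n⁻¹ x_k⁻¹`. -/
def commWord (n k : ℕ) : List (ℕ × Bool) := [(n, true), (k, true), (n, false), (k, false)]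

/-- The loop `a(n,k)`, corresponding to the word `(x_n x_k x_n⁻¹ x_k⁻¹)^{n+k}`. -/
def aLoop (n k : ℕ) : Path hep hep :=
  wordLoop ((List.replicate (n + k) (commWord n k)).flatten)

/-- The loop `w(n,k)`, corresponding to the word `(x₁ x_k x₁⁻¹ x_k⁻¹)^{n}`. -/
def wLoop (n k : ℕ) : Path hep hep :=
  wordLoop ((List.replicate n (commWord 1 k)).flatten)

/-- The fundamental group `π₁(HE, p)` as the set of path-homotopy classes of based
loops at `p`. -/
abbrev piHE : Type := Path.Homotopic.Quotient hep hep

/-- The quotient topology on `π₁(HE,p)` induced by the natural surjection from the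
space of based loops (with the compact-open topology, i.e. uniform convergence). -/
instance : TopologicalSpace piHE :=
  inferInstanceAs (TopologicalSpace (Quotient (Path.Homotopic.setoid hep hep)))

/-- The natural quotient map `q : L(HE,p) → π₁(HE,p)`. -/
def qHE : Path hep hep → piHE := fun f => ⟦f⟧

/-- Multiplication on `π₁(HE,p)` by concatenation of path classes. -/
def piMul : piHE × piHE → piHE := fun z => Path.Homotopic.Quotient.trans z.1 z.2

/-- Inversion on `π₁(HE,p)`, induced by reversal of loops. -/
def piInv : piHE → piHE :=
  Quotient.map Path.symm fun _ _ h => Nonempty.map Path.Homotopy.symm₂ h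

/-- `IsOscWitness n f m t` says that the points `t 0 = 0 < t 1 < ⋯ < t (2m) = 1`
witness that the oscillation number `O_n(f)` is at least `m`: the even-indexed points
are sent by `f` to `p = (0,0)` and the odd-indexed points to `q_n = (2/n, 0)`. -/
def IsOscWitness (n : ℕ) (f : Path hep hep) (m : ℕ) (t : Fin (2 * m + 1) → I) : Prop :=
  StrictMono t ∧ t ⟨0, by omega⟩ = 0 ∧ t ⟨2 * m, by omega⟩ = 1 ∧
    (∀ i : Fin (2 * m + 1), Even (i : ℕ) → ((f (t i) : ℝ × ℝ) = (0, 0))) ∧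
    (∀ i : Fin (2 * m + 1), ¬ Even (i : ℕ) → ((f (t i) : ℝ × ℝ) = (2 / (n : ℝ), 0)))

/-- The oscillation number `O_n(f)`: the largest `m` admitting a witness
(`0` if there is none, and junk if there are arbitrarily large ones). -/
def OscNum (n : ℕ) (f : Path hep hep) : ℕ :=
  sSup {m : ℕ | ∃ t, IsOscWitness n f m t}

/-- The finite wedge `Y_N = {p} ∪ X₁ ∪ ⋯ ∪ X_N`. -/
def Yset (N : ℕ) : Set (ℝ × ℝ) :=
  insert (0, 0) (⋃ n ∈ Set.Icc 1 N, heCircle n)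

/-- The set `F` of pairs `([a(n,k)], [w(n,k)])` for `n, k ≥ 2`. -/
def Fset : Set (piHE × piHE) :=
  {z | ∃ n k : ℕ, 2 ≤ n ∧ 2 ≤ k ∧ z = (⟦aLoop n k⟧, ⟦wLoop n k⟧)}

/-- The set `A = M(F)` of products `[a(n,k)] ⬝ [w(n,k)]` for `n, k ≥ 2`. -/
def Aset : Set piHE :=
  {c | ∃ n k : ℕ, 2 ≤ n ∧ 2 ≤ k ∧ c = Path.Homotopic.Quotient.trans ⟦aLoop n k⟧ ⟦wLoop n k⟧}


section Geometry

open Real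

lemma heCircle_closed (c : ℕ) : IsClosed (heCircle c) := by
  have : heCircle c = (fun z : ℝ × ℝ => (z.1 - 1/(c:ℝ))^2 + z.2^2 - (1/(c:ℝ))^2) ⁻¹' {0} := by
    ext z; simp [heCircle, sub_eq_zero]
  rw [this]
  exact isClosed_singleton.preimage (by fun_prop)

lemma natcast_pos_of_one_le {m : ℕ} (hm : 1 ≤ m) : (0:ℝ) < (m:ℝ) := by
  exact_mod_cast Nat.lt_of_lt_of_le Nat.zero_lt_one hm

lemma mem_heCircle_bounds {m : ℕ} (hm : 1 ≤ m) {w : ℝ × ℝ} (hw : w ∈ heCircle m) :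
    |w.1| ≤ 2/(m:ℝ) ∧ |w.2| ≤ 2/(m:ℝ) := by
  have hm0 : (0:ℝ) < (m:ℝ) := natcast_pos_of_one_le hm
  have ha : (0:ℝ) < 1/(m:ℝ) := by positivity
  have hw' : (w.1 - 1/(m:ℝ))^2 + w.2^2 = (1/(m:ℝ))^2 := hw
  have hdiv : 2/(m:ℝ) = 2*(1/(m:ℝ)) := by ring
  have key : w.1^2 + w.2^2 = 2*(1/(m:ℝ))*w.1 := by nlinarith [hw']
  have h1a : 0 ≤ w.1 := by nlinarith [sq_nonneg w.2, sq_nonneg w.1]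
  have h1b : w.1 ≤ 2*(1/(m:ℝ)) := by nlinarith [sq_nonneg w.2]
  have h2 : w.2^2 ≤ (1/(m:ℝ))^2 := by nlinarith [sq_nonneg (w.1 - 1/(m:ℝ))]
  constructor
  · rw [abs_le]
    constructor
    · linarith [ha]
    · calc w.1 ≤ 2*(1/(m:ℝ)) := h1b
        _ = 2/(m:ℝ) := by ring
  · rw [abs_le]
    have h2' : |w.2| ≤ 1/(m:ℝ) := by
      rw [← Real.sqrt_sq_eq_abs]
      calc Real.sqrt (w.2^2) ≤ Real.sqrt ((1/(m:ℝ))^2) := Real.sqrt_le_sqrt h2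
        _ = 1/(m:ℝ) := Real.sqrt_sq ha.le
    rw [abs_le] at h2'
    constructor <;> [linarith [h2'.1, ha]; linarith [h2'.2, ha]]

lemma dist_origin_le {m : ℕ} (hm : 1 ≤ m) {w : ℝ × ℝ} (hw : w ∈ heCircle m) :
    dist w ((0,0) : ℝ × ℝ) ≤ 2/(m:ℝ) := by
  obtain ⟨h1, h2⟩ := mem_heCircle_bounds hm hw
  rw [Prod.dist_eq]
  simp only [Real.dist_eq, sub_zero]
  exact max_le h1 h2

lemma mem_HEset_iff {w : ℝ × ℝ} : w ∈ HEset ↔ ∃ m, 1 ≤ m ∧ w ∈ heCircle m := by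
  constructor
  · intro hw
    rw [HEset, Set.mem_iUnion] at hw
    obtain ⟨m, hw⟩ := hw
    rw [Set.mem_iUnion] at hw
    obtain ⟨hm, hw⟩ := hw
    exact ⟨m, hm, hw⟩
  · rintro ⟨m, hm, hw⟩
    exact Set.mem_iUnion.2 ⟨m, Set.mem_iUnion.2 ⟨hm, hw⟩⟩

lemma heCircle_inter {m c : ℕ} (hm : 1 ≤ m) (hc : 1 ≤ c) {z : ℝ × ℝ}
    (h1 : z ∈ heCircle m) (h2 : z ∈ heCircle c) (hz : z ≠ (0,0)) : m = c := by
  have hm0 : (0:ℝ) < (m:ℝ) := natcast_pos_of_one_le hm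
  have hc0 : (0:ℝ) < (c:ℝ) := natcast_pos_of_one_le hc
  have e1 : (z.1 - 1/(m:ℝ))^2 + z.2^2 = (1/(m:ℝ))^2 := h1
  have e2 : (z.1 - 1/(c:ℝ))^2 + z.2^2 = (1/(c:ℝ))^2 := h2
  have e1' : z.1^2 + z.2^2 = 2*(1/(m:ℝ))*z.1 := by nlinarith [e1]
  have e2' : z.1^2 + z.2^2 = 2*(1/(c:ℝ))*z.1 := by nlinarith [e2]
  have hz1 : z.1 ≠ 0 := by
    intro h
    apply hz
    have h22 : z.2^2 = 0 := by rw [h] at e1'; nlinarith [e1']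
    have h2' : z.2 = 0 := by nlinarith [sq_nonneg z.2]
    exact Prod.ext h h2'
  have hinv : (1:ℝ)/(m:ℝ) = 1/(c:ℝ) := by
    have h := e1'.symm.trans e2'
    have := mul_right_cancel₀ hz1 h
    linarith
  rw [one_div, one_div, inv_inj] at hinv
  exact_mod_cast hinv

lemma circlePt_mem_heCircle (c : ℕ) (θ : ℝ) : circlePt c θ ∈ heCircle c := by
  have := Real.sin_sq_add_cos_sq θ
  simp only [heCircle, circlePt, Set.mem_setOf_eq]
  ring_nf
  nlinarith [this]

lemma circlePt_zero_eq (θ : ℝ) : circlePt 0 θ = ((0,0) : ℝ × ℝ) := by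
  simp [circlePt]

lemma circle_separation {c : ℕ} (hc : 1 ≤ c) {z : ℝ × ℝ} (hz : z ∈ heCircle c)
    (h0 : z ≠ (0,0)) :
    ∃ ε > 0, ∀ w ∈ HEset, dist w z < ε → (w ∈ heCircle c ∧ w ≠ (0,0)) := by
  have hr : 0 < dist z ((0,0) : ℝ × ℝ) := dist_pos.2 h0
  set r := dist z ((0,0) : ℝ × ℝ) with hrdef
  obtain ⟨M, hM⟩ := exists_nat_gt (4/r)
  have hM0 : (0:ℝ) < M := lt_of_lt_of_le (by positivity) hM.le
  set S : Set (ℝ × ℝ) :=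
    ⋃ m ∈ Finset.filter (fun m => 1 ≤ m ∧ m ≠ c) (Finset.range M), heCircle m with hS
  have hSclosed : IsClosed S := by
    apply Set.Finite.isClosed_biUnion (Finset.finite_toSet _)
    intro m _; exact heCircle_closed m
  have hzS : z ∉ S := by
    intro hmem
    rw [hS, Set.mem_iUnion] at hmem
    obtain ⟨m, hmem⟩ := hmem
    rw [Set.mem_iUnion] at hmem
    obtain ⟨hm, hzm⟩ := hmem
    simp only [Finset.mem_filter] at hm
    exact hm.2.2 (heCircle_inter hm.2.1 hc hzm hz h0)
  obtain ⟨ε₁, hε₁, hball⟩ := Metric.isOpen_iff.1 hSclosed.isOpen_compl z hzS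
  refine ⟨min ε₁ (r/2), lt_min hε₁ (by linarith), ?_⟩
  intro w hw hd
  have hdε₁ : dist w z < ε₁ := hd.trans_le (min_le_left _ _)
  have hdr : dist w z < r/2 := hd.trans_le (min_le_right _ _)
  obtain ⟨m, hm1, hwm⟩ := mem_HEset_iff.1 hw
  have hw0 : w ≠ (0,0) := by
    intro h
    rw [h, dist_comm] at hdr
    rw [← hrdef] at hdr
    linarith
  have hmM : m < M := by
    by_contra hge
    push_neg at hge
    have h2m : dist w ((0,0):ℝ×ℝ) ≤ 2/(m:ℝ) := dist_origin_le hm1 hwm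
    have hmm : (M:ℝ) ≤ (m:ℝ) := by exact_mod_cast hge
    have hmono : 2/(m:ℝ) ≤ 2/(M:ℝ) :=
      div_le_div_of_nonneg_left (by norm_num) hM0 hmm
    have h2M : 2/(M:ℝ) < r/2 := by
      rw [div_lt_iff₀ hM0]
      rw [div_lt_iff₀ hr] at hM
      nlinarith
    have htri : r ≤ dist w z + dist w ((0,0):ℝ×ℝ) := by
      calc r = dist z ((0,0):ℝ×ℝ) := hrdef
        _ ≤ dist z w + dist w ((0,0):ℝ×ℝ) := dist_triangle _ _ _
        _ = dist w z + dist w ((0,0):ℝ×ℝ) := by rw [dist_comm]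
    linarith
  have hmc : m = c := by
    by_contra hne
    have : w ∈ S := by
      rw [hS, Set.mem_iUnion]
      exact ⟨m, Set.mem_iUnion.2 ⟨Finset.mem_filter.2 ⟨Finset.mem_range.2 hmM, hm1, hne⟩, hwm⟩⟩
    exact (hball hdε₁) this
  exact ⟨hmc ▸ hwm, hw0⟩

end Geometry
section PhiMap

open Real Complex

/-- The complex number `o_c - z` where `o_c` is the center of the `c`-th circle. -/
noncomputable def cw (c : ℕ) (z : ℝ × ℝ) : ℂ :=
  ((1/(c:ℝ) - z.1 : ℝ) : ℂ) + ((-z.2 : ℝ) : ℂ) * Complex.I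

open scoped Classical in
/-- The angle map: winds once around the `c`-th circle, constant elsewhere. -/
noncomputable def Phi (c : ℕ) (z : ℝ × ℝ) : Real.Angle :=
  if z ∈ heCircle c then ((Complex.arg (cw c z) : ℝ) : Real.Angle) else 0

lemma cw_continuous (c : ℕ) : Continuous (cw c) := by
  unfold cw
  fun_prop

lemma cw_ne_zero {c : ℕ} (hc : 1 ≤ c) {z : ℝ × ℝ} (hz : z ∈ heCircle c) : cw c z ≠ 0 := by
  have hm0 : (0:ℝ) < (c:ℝ) := natcast_pos_of_one_le hc
  intro h
  have hre : 1/(c:ℝ) - z.1 = 0 := by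
    have := congrArg Complex.re h
    simpa [cw] using this
  have him : -z.2 = 0 := by
    have := congrArg Complex.im h
    simpa [cw] using this
  have hz' : (z.1 - 1/(c:ℝ))^2 + z.2^2 = (1/(c:ℝ))^2 := hz
  have h1 : z.1 = 1/(c:ℝ) := by linarith
  have h2 : z.2 = 0 := by linarith
  rw [h1, h2] at hz'
  simp at hz'
  have : (0:ℝ) < 1/(c:ℝ) := by positivity
  nlinarith

lemma cw_origin (c : ℕ) : cw c ((0,0) : ℝ × ℝ) = ((1/(c:ℝ) : ℝ) : ℂ) := by
  unfold cw
  push_cast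
  ring

lemma Phi_origin (c : ℕ) (hc : 1 ≤ c) : Phi c ((0,0) : ℝ × ℝ) = 0 := by
  have hm0 : (0:ℝ) < (c:ℝ) := natcast_pos_of_one_le hc
  have hmem : ((0,0) : ℝ × ℝ) ∈ heCircle c := by
    simp [heCircle]
  rw [Phi, if_pos hmem]
  rw [cw_origin, Complex.arg_ofReal_of_nonneg (by positivity)]
  simp

lemma Phi_circlePt_self {c : ℕ} (hc : 1 ≤ c) (θ : ℝ) :
    Phi c (circlePt c θ) = ((θ : ℝ) : Real.Angle) := by
  have hm0 : (0:ℝ) < (c:ℝ) := natcast_pos_of_one_le hc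
  rw [Phi, if_pos (circlePt_mem_heCircle c θ)]
  have hcw : cw c (circlePt c θ) =
      ((1/(c:ℝ) : ℝ) : ℂ) * (Real.cos θ + Real.sin θ * Complex.I) := by
    simp only [cw, circlePt]
    push_cast
    ring
  rw [hcw, Complex.arg_real_mul _ (by positivity : (0:ℝ) < 1/(c:ℝ))]
  have := Complex.arg_cos_add_sin_mul_I_coe_angle ((θ : ℝ) : Real.Angle)
  rwa [Real.Angle.cos_coe, Real.Angle.sin_coe] at this

lemma Phi_circlePt_ne {c j : ℕ} (hc : 1 ≤ c) (hj : j ≠ c) (θ : ℝ) :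
    Phi c (circlePt j θ) = 0 := by
  rcases eq_or_ne (circlePt j θ) ((0,0) : ℝ × ℝ) with h | h
  · rw [h]; exact Phi_origin c hc
  · have hj1 : 1 ≤ j := by
      rcases Nat.eq_zero_or_pos j with h0 | h0
      · exact absurd (h0 ▸ circlePt_zero_eq θ) h
      · exact h0
    rw [Phi, if_neg]
    intro hmem
    exact hj (heCircle_inter hj1 hc (circlePt_mem_heCircle j θ) hmem h)

lemma Phi_continuousOn {c : ℕ} (hc : 1 ≤ c) : ContinuousOn (Phi c) HEset := by
  intro z hz
  by_cases hzc : z ∈ heCircle c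
  · rcases eq_or_ne z ((0,0) : ℝ × ℝ) with h0 | h0
    · -- continuity at the origin
      subst h0
      intro U hU
      rw [Phi_origin c hc] at hU
      have hco : ContinuousAt (fun w : ℝ × ℝ => ((Complex.arg (cw c w) : ℝ) : Real.Angle))
          ((0,0) : ℝ × ℝ) := by
        have hne : cw c ((0,0):ℝ×ℝ) ≠ 0 := cw_ne_zero hc hzc
        exact (Complex.continuousAt_arg_coe_angle hne).comp (cw_continuous c).continuousAt
      have hval : ((Complex.arg (cw c ((0,0):ℝ×ℝ)) : ℝ) : Real.Angle) = 0 := by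
        rw [cw_origin, Complex.arg_ofReal_of_nonneg (by positivity)]
        simp
      rw [ContinuousAt, hval] at hco
      have hU' := hco hU
      rw [Filter.mem_map] at hU' ⊢
      filter_upwards [nhdsWithin_le_nhds hU'] with w hw
      by_cases hwc : w ∈ heCircle c
      · simpa [Phi, if_pos hwc] using hw
      · have h0' : Phi c w = 0 := by rw [Phi, if_neg hwc]
        simp only [Set.mem_preimage]
        rw [h0']
        exact mem_of_mem_nhds hU
    · -- z on the circle, away from the origin
      obtain ⟨ε, hε, hloc⟩ := circle_separation hc hzc h0
      have hco : ContinuousAt (fun w : ℝ × ℝ => ((Complex.arg (cw c w) : ℝ) : Real.Angle)) z :=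
        (Complex.continuousAt_arg_coe_angle (cw_ne_zero hc hzc)).comp
          (cw_continuous c).continuousAt
      apply ContinuousWithinAt.congr_of_eventuallyEq hco.continuousWithinAt
      · filter_upwards [Filter.inter_mem (nhdsWithin_le_nhds (Metric.ball_mem_nhds z hε))
          self_mem_nhdsWithin] with w hw
        obtain ⟨hw1, hw2⟩ := hw
        rw [Phi, if_pos (hloc w hw2 (Metric.mem_ball.1 hw1)).1]
      · rw [Phi, if_pos hzc]
  · -- z not on the c-th circle
    have h0 : z ≠ ((0,0) : ℝ × ℝ) := by
      intro h
      apply hzc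
      rw [h]
      simp [heCircle]
    obtain ⟨m, hm1, hzm⟩ := mem_HEset_iff.1 hz
    have hmc : m ≠ c := by
      intro h
      exact hzc (h ▸ hzm)
    obtain ⟨ε, hε, hloc⟩ := circle_separation hm1 hzm h0
    have hzero : ∀ w ∈ HEset, dist w z < ε → Phi c w = 0 := by
      intro w hw hd
      obtain ⟨hwm, hw0⟩ := hloc w hw hd
      rw [Phi, if_neg]
      intro hwc
      exact hmc (heCircle_inter hm1 hc hwm hwc hw0)
    have hPz : Phi c z = 0 := hzero z hz (by simpa using hε)
    apply ContinuousWithinAt.congr_of_eventuallyEq (continuousWithinAt_const (b := (0 : Real.Angle)))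
    · filter_upwards [Filter.inter_mem (nhdsWithin_le_nhds (Metric.ball_mem_nhds z hε))
        self_mem_nhdsWithin] with w hw
      exact hzero w hw.2 (Metric.mem_ball.1 hw.1)
    · exact hPz

end PhiMap
section PsiMap

open Real Complex

open scoped Classical in
/-- The second-level angle map, defined on (the pullback of) `ℝ ×_{Φ₁} HE`:
it winds around the `c`-th circle only when the first (lifted) coordinate is
near `0`. -/
noncomputable def Psi (c : ℕ) (q : ℝ × (ℝ × ℝ)) : Real.Angle :=
  if |q.1| < π then Phi c q.2 else 0

/-- The pullback of the covering `ℝ → ℝ/2πℤ` along `Φ₁ : HE → ℝ/2πℤ`. -/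
def Pset : Set (ℝ × (ℝ × ℝ)) :=
  {q | q.2 ∈ HEset ∧ ((q.1 : ℝ) : Real.Angle) = Phi 1 q.2}

lemma Psi_of_lt {c : ℕ} {t : ℝ} (h : |t| < π) (z : ℝ × ℝ) :
    Psi c (t, z) = Phi c z := by
  rw [Psi, if_pos h]

lemma Psi_of_not_lt {c : ℕ} {t : ℝ} (h : ¬ |t| < π) (z : ℝ × ℝ) :
    Psi c (t, z) = 0 := by
  rw [Psi, if_neg h]

lemma Psi_origin {c : ℕ} (hc : 1 ≤ c) (t : ℝ) : Psi c (t, ((0,0) : ℝ × ℝ)) = 0 := by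
  by_cases h : |t| < π
  · rw [Psi_of_lt h, Phi_origin c hc]
  · exact Psi_of_not_lt h _

lemma Phi_one_eq_pi_imp {z : ℝ × ℝ} (hz : z ∈ HEset)
    (h : Phi 1 z = ((π : ℝ) : Real.Angle)) : z = ((2, 0) : ℝ × ℝ) := by
  have hne : ((π : ℝ) : Real.Angle) ≠ 0 := Real.Angle.pi_ne_zero
  by_cases hz1 : z ∈ heCircle 1
  · rw [Phi, if_pos hz1] at h
    have harg : Complex.arg (cw 1 z) = π := by
      have h1 : (((Complex.arg (cw 1 z) : ℝ) : Real.Angle)).toReal = Real.pi := by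
        rw [h]; exact Real.Angle.toReal_pi
      rwa [Real.Angle.toReal_coe_eq_self_iff.2
        ⟨Complex.neg_pi_lt_arg _, Complex.arg_le_pi _⟩] at h1
    rw [Complex.arg_eq_pi_iff] at harg
    have hre : (cw 1 z).re = 1 - z.1 := by simp [cw]
    have him : (cw 1 z).im = -z.2 := by simp [cw]
    rw [hre] at harg
    rw [him] at harg
    have h2 : z.2 = 0 := by linarith [harg.2]
    have h1' : 1 < z.1 := by linarith [harg.1]
    have hc1 : (z.1 - 1)^2 + z.2^2 = 1 := by
      have := hz1
      simp only [heCircle, Set.mem_setOf_eq, Nat.cast_one] at this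
      convert this using 2 <;> norm_num
    rw [h2] at hc1
    have : (z.1 - 1)^2 = 1 := by linarith [hc1]
    have : z.1 = 2 := by nlinarith
    exact Prod.ext this h2
  · rw [Phi, if_neg hz1] at h
    exact absurd h.symm hne

lemma two_zero_mem : ((2,0) : ℝ × ℝ) ∈ heCircle 1 := by
  simp [heCircle]
  norm_num

lemma Psi_continuousOn {c : ℕ} (hc : 2 ≤ c) : ContinuousOn (Psi c) Pset := by
  have hc1 : (1:ℕ) ≤ c := le_trans (by norm_num) hc
  intro q hq
  obtain ⟨hzHE, ht⟩ := hq
  rcases lt_trichotomy (|q.1|) π with hlt | heq | hgt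
  · -- |t| < π : locally Psi = Phi c ∘ snd
    have hsnd : ContinuousWithinAt (fun x : ℝ × (ℝ × ℝ) => Phi c x.2) Pset q :=
      ContinuousWithinAt.comp (Phi_continuousOn hc1 q.2 hzHE)
        continuous_snd.continuousWithinAt (fun x hx => hx.1)
    apply ContinuousWithinAt.congr_of_eventuallyEq hsnd
    · have hopen : IsOpen {x : ℝ × (ℝ × ℝ) | |x.1| < π} := by
        have : Continuous fun x : ℝ × (ℝ × ℝ) => |x.1| := by fun_prop
        exact isOpen_lt this continuous_const
      filter_upwards [nhdsWithin_le_nhds (hopen.mem_nhds hlt)] with x hx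
      exact Psi_of_lt hx _
    · exact Psi_of_lt hlt _
  · -- |t| = π : q.2 = (2,0) and Psi vanishes near q
    have hq2 : q.2 = ((2,0) : ℝ × ℝ) := by
      apply Phi_one_eq_pi_imp hzHE
      rcases abs_eq (le_of_lt Real.pi_pos) |>.1 heq with h | h
      · rw [← ht, h]
      · rw [← ht, h]
        rw [Real.Angle.angle_eq_iff_two_pi_dvd_sub]
        exact ⟨-1, by ring⟩
    have h20 : ((2,0) : ℝ × ℝ) ≠ ((0,0) : ℝ × ℝ) := by
      intro h
      have := congrArg Prod.fst h
      norm_num at this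
    obtain ⟨ε, hε, hloc⟩ := circle_separation (le_refl 1) two_zero_mem h20
    have hzero : ∀ x ∈ Pset, dist x.2 ((2,0):ℝ×ℝ) < ε → Psi c x = 0 := by
      intro x hx hd
      obtain ⟨hw1, hw0⟩ := hloc x.2 hx.1 hd
      have hPhic : Phi c x.2 = 0 := by
        rw [Phi, if_neg]
        intro hwc
        have := heCircle_inter (le_refl 1) hc1 hw1 hwc hw0
        omega
      by_cases hb : |x.1| < π
      · rw [Psi_of_lt hb, hPhic]
      · exact Psi_of_not_lt hb _
    have hqv : Psi c q = 0 := by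
      apply hzero q ⟨hzHE, ht⟩
      rw [hq2]
      simpa using hε
    apply ContinuousWithinAt.congr_of_eventuallyEq
      (continuousWithinAt_const (b := (0 : Real.Angle)))
    · have hmem : {x : ℝ × (ℝ × ℝ) | dist x.2 ((2,0):ℝ×ℝ) < ε} ∈ nhds q := by
        have hcont : Continuous fun x : ℝ × (ℝ × ℝ) => dist x.2 ((2,0):ℝ×ℝ) := by
          fun_prop
        have hopen : IsOpen {x : ℝ × (ℝ × ℝ) | dist x.2 ((2,0):ℝ×ℝ) < ε} :=
          isOpen_lt hcont continuous_const
        apply hopen.mem_nhds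
        show dist q.2 _ < ε
        rw [hq2]
        simpa using hε
      filter_upwards [nhdsWithin_le_nhds hmem, self_mem_nhdsWithin] with x hx hxP
      exact hzero x hxP hx
    · exact hqv
  · -- |t| > π : Psi locally 0
    have hopen : IsOpen {x : ℝ × (ℝ × ℝ) | π < |x.1|} := by
      have : Continuous fun x : ℝ × (ℝ × ℝ) => |x.1| := by fun_prop
      exact isOpen_lt continuous_const this
    apply ContinuousWithinAt.congr_of_eventuallyEq
      (continuousWithinAt_const (b := (0 : Real.Angle)))
    · filter_upwards [nhdsWithin_le_nhds (hopen.mem_nhds hgt)] with x hx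
      exact Psi_of_not_lt (not_lt.2 (le_of_lt hx)) _
    · exact Psi_of_not_lt (by linarith) _

end PsiMap
section Lifting

open Real

lemma angle_coe_int_mul (x : ℝ) (m : ℤ) :
    ((x + 2*π*m : ℝ) : Real.Angle) = ((x : ℝ) : Real.Angle) := by
  rw [Real.Angle.angle_eq_iff_two_pi_dvd_sub]
  exact ⟨m, by push_cast; ring⟩

lemma angle_coe_two_pi_int (m : ℤ) : ((2*π*m : ℝ) : Real.Angle) = 0 := by
  have := angle_coe_int_mul 0 m
  rw [zero_add] at this
  rw [this, Real.Angle.coe_zero]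

lemma angle_norm_coe_pi : ‖((π : ℝ) : Real.Angle)‖ = π := by
  show ‖((π : ℝ) : AddCircle (2*π))‖ = π
  rw [AddCircle.norm_eq]
  have h1 : (2*π)⁻¹ * π = 1/2 := by
    have := Real.pi_ne_zero
    field_simp
  rw [h1]
  have h2 : round ((1:ℝ)/2) = 1 := by
    rw [round_eq]
    norm_num
  rw [h2]
  have h3 : π - ((1:ℤ):ℝ)*(2*π) = -π := by push_cast; ring
  rw [h3, abs_neg, abs_of_pos Real.pi_pos]

lemma continuousAt_angle_toReal {θ : Real.Angle} (h : θ ≠ ((π:ℝ) : Real.Angle)) :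
    ContinuousAt Real.Angle.toReal θ := by
  induction θ using QuotientAddGroup.induction_on with
  | H x =>
  have hx : ((x : ℝ) : ℝ ⧸ AddSubgroup.zmultiples (2*π)) ≠
      ((-π : ℝ) : ℝ ⧸ AddSubgroup.zmultiples (2*π)) := by
    intro e
    apply h
    have e' : ((x : ℝ) : Real.Angle) = ((-π : ℝ) : Real.Angle) := e
    show ((x : ℝ) : Real.Angle) = _
    rw [e', Real.Angle.angle_eq_iff_two_pi_dvd_sub]
    exact ⟨-1, by push_cast; ring⟩
  show Filter.Tendsto Real.Angle.toReal (nhds ((x : ℝ) : Real.Angle)) (nhds (Real.Angle.toReal ((x : ℝ) : Real.Angle)))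
  rw [Filter.Tendsto, show nhds ((x : ℝ) : Real.Angle) = Filter.map (QuotientAddGroup.mk : ℝ → Real.Angle) (nhds x) from QuotientAddGroup.nhds_eq _ x]
  show Filter.map (Real.Angle.toReal ∘ (QuotientAddGroup.mk : ℝ → Real.Angle)) (nhds x) ≤ nhds (Real.Angle.toReal (QuotientAddGroup.mk x : Real.Angle))
  have hfun : (Real.Angle.toReal ∘ (QuotientAddGroup.mk : ℝ → Real.Angle)) =
      toIocMod Real.two_pi_pos (-π) := funext fun y => Real.Angle.toReal_coe y
  have hval : Real.Angle.toReal (QuotientAddGroup.mk x : Real.Angle) = toIocMod Real.two_pi_pos (-π) x :=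
    Real.Angle.toReal_coe x
  rw [hfun, hval]
  exact continuousAt_toIocMod Real.two_pi_pos (-π) (AddCommGroup.not_modEq_iff_ne_mod_zmultiples.2 hx)

/-- Uniqueness of lifts along `ℝ → ℝ/2πℤ` on preconnected spaces. -/
lemma lift_unique {X : Type} [TopologicalSpace X] [PreconnectedSpace X]
    {F G : X → ℝ} (hF : Continuous F) (hG : Continuous G)
    (h : ∀ x, ((F x : ℝ) : Real.Angle) = ((G x : ℝ) : Real.Angle))
    (x₀ : X) (h₀ : F x₀ = G x₀) : ∀ x, F x = G x := by
  have key : ∀ x, ∃ m : ℤ, F x - G x = 2*π*m := by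
    intro x
    obtain ⟨k, hk⟩ := (Real.Angle.angle_eq_iff_two_pi_dvd_sub).1 (h x).symm
    refine ⟨-k, ?_⟩
    push_cast
    linarith
  have hD : Continuous fun x => F x - G x := hF.sub hG
  set s : Set X := {x | F x - G x = 0} with hs
  have hsne : s.Nonempty := ⟨x₀, by simp [hs, h₀]⟩
  have hsclosed : IsClosed s := isClosed_eq hD continuous_const
  have hsopen : IsOpen s := by
    rw [isOpen_iff_mem_nhds]
    intro x hx
    have hx' : F x - G x = 0 := hx
    filter_upwards [hD.continuousAt (x := x) (Metric.ball_mem_nhds _ Real.two_pi_pos)] with y hy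
    obtain ⟨m, hm⟩ := key y
    rw [Set.mem_preimage, Metric.mem_ball, Real.dist_eq] at hy
    have hy' : |F y - G y - (F x - G x)| < 2*π := hy
    rw [hx', sub_zero, hm] at hy'
    have hm0 : m = 0 := by
      by_contra hne
      have h1le : (1:ℝ) ≤ |(m:ℝ)| := by
        have : (1:ℤ) ≤ |m| := Int.one_le_abs hne
        exact_mod_cast this
      have habs : |2*π*(m:ℝ)| = 2*π*|(m:ℝ)| := by
        rw [abs_mul, abs_of_pos Real.two_pi_pos]
      rw [habs] at hy'
      nlinarith [Real.two_pi_pos]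
    show F y - G y = 0
    rw [hm, hm0]
    simp
  have huniv : s = Set.univ := IsClopen.eq_univ ⟨hsclosed, hsopen⟩ hsne
  intro x
  have hx : x ∈ s := huniv ▸ Set.mem_univ x
  have : F x - G x = 0 := hx
  linarith

/-- Existence of lifts along `ℝ → ℝ/2πℤ` for maps from compact metric spaces
equipped with a contraction. -/
lemma exists_lift {X : Type} [MetricSpace X] [CompactSpace X]
    (x₀ : X) (con : X × I → X) (hcon : Continuous con)
    (hcon0 : ∀ x, con (x, 0) = x₀) (hcon1 : ∀ x, con (x, 1) = x)
    {f : X → Real.Angle} (hf : Continuous f) :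
    ∃ F : X → ℝ, Continuous F ∧ ∀ x, ((F x : ℝ) : Real.Angle) = f x := by
  set g : X × I → Real.Angle := f ∘ con with hg
  have hgc : Continuous g := hf.comp hcon
  have hgu : UniformContinuous g := CompactSpace.uniformContinuous_of_continuous hgc
  obtain ⟨δ, hδ, hH⟩ := Metric.uniformContinuous_iff.1 hgu (π/2) (by positivity)
  set N : ℕ := ⌈1/δ⌉₊ + 1 with hN
  have hN0 : 0 < N := Nat.succ_pos _
  have hN0' : (0:ℝ) < N := by exact_mod_cast hN0
  have hNδ : 1/(N:ℝ) < δ := by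
    rw [div_lt_iff₀ hN0']
    have h1 : 1/δ < (N:ℝ) := by
      calc 1/δ ≤ (⌈1/δ⌉₊ : ℝ) := Nat.le_ceil _
        _ < N := by
          rw [hN]
          push_cast
          linarith
    rw [div_lt_iff₀ hδ] at h1
    linarith
  set ti : ℕ → I := fun i => Set.projIcc (0:ℝ) 1 zero_le_one ((i:ℝ)/(N:ℝ)) with hti
  have hti_dist : ∀ i : ℕ, dist (ti (i+1)) (ti i) < δ := by
    intro i
    have hlip := LipschitzWith.projIcc (zero_le_one (α := ℝ))
    have hd := hlip.dist_le_mul (((i+1:ℕ):ℝ)/(N:ℝ)) (((i:ℕ):ℝ)/(N:ℝ))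
    have heq : dist (((i+1:ℕ):ℝ)/(N:ℝ)) (((i:ℕ):ℝ)/(N:ℝ)) = 1/(N:ℝ) := by
      have e : ((i:ℝ)+1)/(N:ℝ) - (i:ℝ)/(N:ℝ) = 1/(N:ℝ) := by field_simp; ring
      have e2 : ((i+1:ℕ):ℝ) = (i:ℝ)+1 := by push_cast; ring
      rw [Real.dist_eq, e2, e]
      exact abs_of_nonneg (by positivity)
    calc dist (ti (i+1)) (ti i) ≤ 1 * dist (((i+1:ℕ):ℝ)/(N:ℝ)) (((i:ℕ):ℝ)/(N:ℝ)) := hd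
      _ = 1/(N:ℝ) := by rw [heq]; ring
      _ < δ := hNδ
  have key : ∀ i : ℕ, ∃ F : X → ℝ, Continuous F ∧
      ∀ x, ((F x : ℝ) : Real.Angle) = g (x, ti i) := by
    intro i
    induction i with
    | zero =>
      refine ⟨fun _ => (f x₀).toReal, continuous_const, fun x => ?_⟩
      have h0 : ti 0 = (0 : I) := by
        apply Subtype.ext
        simp [hti, Set.projIcc]
      rw [h0, Real.Angle.coe_toReal]
      show f x₀ = g (x, (0:I))
      rw [hg]
      show f x₀ = f (con (x, 0))
      rw [hcon0]
    | succ i ih =>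
      obtain ⟨F, hFc, hFe⟩ := ih
      set h : X → Real.Angle := fun x => g (x, ti (i+1)) - g (x, ti i) with hh
      have hgi : ∀ j : ℕ, Continuous fun x => g (x, ti j) := fun j =>
        hgc.comp (continuous_id.prodMk continuous_const)
      have hhc : Continuous h := (hgi (i+1)).sub (hgi i)
      have hsmall : ∀ x, ‖h x‖ < π/2 := by
        intro x
        have hdist : dist ((x, ti (i+1)) : X × I) ((x, ti i) : X × I) < δ := by
          rw [Prod.dist_eq, dist_self]
          rw [max_eq_right dist_nonneg]
          exact hti_dist i
        have := hH hdist
        rwa [dist_eq_norm] at this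
      have hne : ∀ x, h x ≠ ((π:ℝ) : Real.Angle) := by
        intro x he
        have := hsmall x
        rw [he, angle_norm_coe_pi] at this
        linarith [Real.pi_pos]
      refine ⟨fun x => F x + (h x).toReal, ?_, fun x => ?_⟩
      · apply hFc.add
        rw [continuous_iff_continuousAt]
        intro x
        exact (continuousAt_angle_toReal (hne x)).comp hhc.continuousAt
      · rw [Real.Angle.coe_add, hFe x, Real.Angle.coe_toReal]
        show g (x, ti i) + (g (x, ti (i+1)) - g (x, ti i)) = g (x, ti (i+1))
        abel
  obtain ⟨F, hFc, hFe⟩ := key N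
  refine ⟨F, hFc, fun x => ?_⟩
  have h1 : ti N = (1 : I) := by
    apply Subtype.ext
    simp [hti, Set.projIcc, div_self hN0'.ne']
  rw [hFe x, h1, hg]
  show f (con (x, 1)) = f x
  rw [hcon1]

end Lifting
section Invariance

open Real

/-- A contraction of the unit interval. -/
def conI : I × I → I := fun q =>
  ⟨(q.2 : ℝ) * (q.1 : ℝ), mul_nonneg q.2.2.1 q.1.2.1,
    mul_le_one₀ q.2.2.2 q.1.2.1 q.1.2.2⟩

lemma conI_continuous : Continuous conI := by
  apply Continuous.subtype_mk
  fun_prop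

lemma conI_zero (x : I) : conI (x, 0) = 0 := by
  apply Subtype.ext
  show (0:ℝ) * (x:ℝ) = 0
  ring

lemma conI_one (x : I) : conI (x, 1) = x := by
  apply Subtype.ext
  show (1:ℝ) * (x:ℝ) = (x:ℝ)
  ring

/-- A contraction of the unit square. -/
def conII : (I × I) × I → I × I := fun q => (conI (q.1.1, q.2), conI (q.1.2, q.2))

lemma conII_continuous : Continuous conII := by
  apply Continuous.prodMk
  · exact conI_continuous.comp (by fun_prop)
  · exact conI_continuous.comp (by fun_prop)

lemma conII_zero (x : I × I) : conII (x, 0) = ((0 : I), (0 : I)) := by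
  show (conI (x.1, 0), conI (x.2, 0)) = _
  rw [conI_zero, conI_zero]

lemma conII_one (x : I × I) : conII (x, 1) = x := by
  show (conI (x.1, 1), conI (x.2, 1)) = _
  rw [conI_one, conI_one]

lemma angle_coe_sub (x y : ℝ) :
    ((x - y : ℝ) : Real.Angle) = ((x:ℝ) : Real.Angle) - ((y:ℝ) : Real.Angle) :=
  Real.Angle.coe_sub x y

/-- The key homotopy-invariance: the endpoint of the second-level lift only
depends on the path-homotopy class of the loop. -/
theorem liftpair_invariant {c : ℕ} (hc : 2 ≤ c) {f₀ f₁ : Path hep hep}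
    (hhom : f₀.Homotopic f₁)
    {u₀ v₀ u₁ v₁ : I → ℝ}
    (hu₀c : Continuous u₀) (hv₀c : Continuous v₀)
    (hu₁c : Continuous u₁) (hv₁c : Continuous v₁)
    (hu₀0 : u₀ 0 = 0) (hv₀0 : v₀ 0 = 0) (hu₁0 : u₁ 0 = 0) (hv₁0 : v₁ 0 = 0)
    (hu₀ : ∀ t, ((u₀ t : ℝ) : Real.Angle) = Phi 1 ((f₀ t : HEset) : ℝ × ℝ))
    (hv₀ : ∀ t, ((v₀ t : ℝ) : Real.Angle) = Psi c (u₀ t, ((f₀ t : HEset) : ℝ × ℝ)))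
    (hu₁ : ∀ t, ((u₁ t : ℝ) : Real.Angle) = Phi 1 ((f₁ t : HEset) : ℝ × ℝ))
    (hv₁ : ∀ t, ((v₁ t : ℝ) : Real.Angle) = Psi c (u₁ t, ((f₁ t : HEset) : ℝ × ℝ))) :
    v₀ 1 = v₁ 1 := by
  have hc1 : (1:ℕ) ≤ c := le_trans (by norm_num) hc
  obtain ⟨H⟩ := hhom
  have hHc : Continuous fun q : I × I => ((H q : HEset) : ℝ × ℝ) :=
    continuous_subtype_val.comp H.continuous
  -- the basepoint values of H
  have hH0 : ∀ t, H (0, t) = f₀ t := fun t => H.apply_zero t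
  have hH1 : ∀ t, H (1, t) = f₁ t := fun t => H.apply_one t
  have hHs0 : ∀ s, H (s, 0) = hep := by
    intro s
    have := H.eq_fst s (show (0:I) ∈ ({0,1} : Set I) by simp)
    rw [this]
    exact f₀.source
  have hHs1 : ∀ s, H (s, 1) = hep := by
    intro s
    have := H.eq_fst s (show (1:I) ∈ ({0,1} : Set I) by simp)
    rw [this]
    exact f₀.target
  have hhep : ((hep : HEset) : ℝ × ℝ) = ((0,0) : ℝ × ℝ) := rfl
  -- lift Φ₁ ∘ H to the square
  have hΦH : Continuous fun q : I × I => Phi 1 ((H q : HEset) : ℝ × ℝ) :=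
    ContinuousOn.comp_continuous (Phi_continuousOn (le_refl 1)) hHc fun q => (H q).2
  obtain ⟨W', hW'c, hW'e⟩ :=
    exists_lift ((0,0) : I × I) conII conII_continuous conII_zero conII_one hΦH
  set W : I × I → ℝ := fun q => W' q - W' ((0:I),(0:I)) with hW
  have hWc : Continuous W := hW'c.sub continuous_const
  have hWe : ∀ q, ((W q : ℝ) : Real.Angle) = Phi 1 ((H q : HEset) : ℝ × ℝ) := by
    intro q
    rw [hW]
    show ((W' q - W' ((0:I),(0:I)) : ℝ) : Real.Angle) = _
    rw [angle_coe_sub, hW'e, hW'e]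
    have : Phi 1 ((H ((0:I),(0:I)) : HEset) : ℝ × ℝ) = 0 := by
      rw [hHs0, hhep]
      exact Phi_origin 1 (le_refl 1)
    rw [this, sub_zero]
  have hW00 : W ((0:I),(0:I)) = 0 := sub_self _
  -- the bottom edge of W vanishes
  have hWbot : ∀ s : I, W (s, 0) = 0 := by
    refine lift_unique (F := fun s : I => W (s, 0)) (G := fun _ : I => (0:ℝ))
      (hWc.comp (continuous_id.prodMk continuous_const)) continuous_const ?_ 0 hW00
    intro s
    rw [hWe (s, 0), hHs0, hhep, Phi_origin 1 (le_refl 1), Real.Angle.coe_zero]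
  -- the left edge of W is u₀, the right edge is u₁
  have hWleft : ∀ t : I, W ((0:I), t) = u₀ t := by
    refine lift_unique (F := fun t : I => W ((0:I), t)) (G := u₀)
      (hWc.comp ((continuous_const (y := (0:I))).prodMk continuous_id)) hu₀c ?_ 0
      (by show W ((0:I),(0:I)) = u₀ 0; rw [hWbot 0, hu₀0])
    intro t
    rw [hWe ((0:I), t), hH0, hu₀]
  have hWright : ∀ t : I, W ((1:I), t) = u₁ t := by
    refine lift_unique (F := fun t : I => W ((1:I), t)) (G := u₁)
      (hWc.comp ((continuous_const (y := (1:I))).prodMk continuous_id)) hu₁c ?_ 0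
      (by show W ((1:I),(0:I)) = u₁ 0; rw [hWbot 1, hu₁0])
    intro t
    rw [hWe ((1:I), t), hH1, hu₁]
  -- lift Ψ ∘ (W, H) to the square
  have hmem : ∀ q : I × I, (W q, ((H q : HEset) : ℝ × ℝ)) ∈ Pset := fun q =>
    ⟨(H q).2, hWe q⟩
  have hΞc : Continuous fun q : I × I => Psi c (W q, ((H q : HEset) : ℝ × ℝ)) :=
    ContinuousOn.comp_continuous (Psi_continuousOn hc) (hWc.prodMk hHc) hmem
  obtain ⟨V', hV'c, hV'e⟩ :=
    exists_lift ((0,0) : I × I) conII conII_continuous conII_zero conII_one hΞc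
  set V : I × I → ℝ := fun q => V' q - V' ((0:I),(0:I)) with hV
  have hVc : Continuous V := hV'c.sub continuous_const
  have hVe : ∀ q, ((V q : ℝ) : Real.Angle) = Psi c (W q, ((H q : HEset) : ℝ × ℝ)) := by
    intro q
    rw [hV]
    show ((V' q - V' ((0:I),(0:I)) : ℝ) : Real.Angle) = _
    rw [angle_coe_sub, hV'e, hV'e]
    have : Psi c (W ((0:I),(0:I)), ((H ((0:I),(0:I)) : HEset) : ℝ × ℝ)) = 0 := by
      rw [hHs0, hhep]
      exact Psi_origin hc1 _
    rw [this, sub_zero]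
  have hV00 : V ((0:I),(0:I)) = 0 := sub_self _
  -- the bottom edge of V vanishes
  have hVbot : ∀ s : I, V (s, 0) = 0 := by
    refine lift_unique (F := fun s : I => V (s, 0)) (G := fun _ : I => (0:ℝ))
      (hVc.comp (continuous_id.prodMk continuous_const)) continuous_const ?_ 0 hV00
    intro s
    rw [hVe (s, 0), hHs0, hhep, Psi_origin hc1, Real.Angle.coe_zero]
  -- the left edge of V is v₀, the right edge is v₁
  have hVleft : ∀ t : I, V ((0:I), t) = v₀ t := by
    refine lift_unique (F := fun t : I => V ((0:I), t)) (G := v₀)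
      (hVc.comp ((continuous_const (y := (0:I))).prodMk continuous_id)) hv₀c ?_ 0
      (by show V ((0:I),(0:I)) = v₀ 0; rw [hVbot 0, hv₀0])
    intro t
    rw [hVe ((0:I), t), hH0, hWleft, hv₀]
  have hVright : ∀ t : I, V ((1:I), t) = v₁ t := by
    refine lift_unique (F := fun t : I => V ((1:I), t)) (G := v₁)
      (hVc.comp ((continuous_const (y := (1:I))).prodMk continuous_id)) hv₁c ?_ 0
      (by show V ((1:I),(0:I)) = v₁ 0; rw [hVbot 1, hv₁0])
    intro t
    rw [hVe ((1:I), t), hH1, hWright, hv₁]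
  -- the top edge of V is constant
  have hVtop : ∀ s : I, V (s, 1) = V ((0:I), (1:I)) := by
    refine lift_unique (F := fun s : I => V (s, 1)) (G := fun _ : I => V ((0:I), (1:I)))
      (hVc.comp (continuous_id.prodMk continuous_const)) continuous_const ?_ 0 rfl
    intro s
    rw [hVe (s, 1), hHs1, hhep, Psi_origin hc1, hVe ((0:I), (1:I)), hHs1, hhep,
      Psi_origin hc1]
  calc v₀ 1 = V ((0:I), 1) := (hVleft 1).symm
    _ = V ((1:I), 1) := (hVtop 1).symm
    _ = v₁ 1 := hVright 1

end Invariance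
section Words

open Real

def lsgn (b : Bool) : ℤ := if b then 1 else -1

lemma lsgn_true : lsgn true = 1 := rfl
lemma lsgn_false : lsgn false = -1 := rfl

def d1 : List (ℕ × Bool) → ℤ
  | [] => 0
  | (j, b) :: L => (if j = 1 then lsgn b else 0) + d1 L

def cnt (c : ℕ) : List (ℕ × Bool) → ℤ → ℤ
  | [], _ => 0
  | (j, b) :: L, m =>
      (if j = c ∧ m = 0 then lsgn b else 0) + cnt c L (m + (if j = 1 then lsgn b else 0))

/-- The affine path from `a` to `b` in `ℝ`. -/
def seg (a b : ℝ) : Path a b where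
  toFun := fun t => a + (b - a) * (t : ℝ)
  continuous_toFun := by fun_prop
  source' := by simp
  target' := by simp

lemma seg_apply (a b : ℝ) (t : I) : seg a b t = a + (b - a) * (t : ℝ) := rfl

lemma angle_coe_eq_of_sub {x y : ℝ} (m : ℤ) (h : x = y + 2*π*(m:ℝ)) :
    ((x : ℝ) : Real.Angle) = ((y : ℝ) : Real.Angle) := by
  rw [h]; exact angle_coe_int_mul y m

lemma angle_coe_eq_zero {x : ℝ} (m : ℤ) (h : x = 2*π*(m:ℝ)) :
    ((x : ℝ) : Real.Angle) = 0 := by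
  rw [h]; exact angle_coe_two_pi_int m

lemma not_abs_two_pi_int_lt {m : ℤ} (hm : m ≠ 0) : ¬ |2*π*(m:ℝ)| < π := by
  have h1 : (1:ℝ) ≤ |(m:ℝ)| := by
    have : (1:ℤ) ≤ |m| := Int.one_le_abs hm
    exact_mod_cast this
  have : |2*π*(m:ℝ)| = 2*π*|(m:ℝ)| := by
    rw [abs_mul, abs_of_pos Real.two_pi_pos]
  rw [this]
  push_neg
  nlinarith [Real.pi_pos]

lemma Psi_of_Phi_zero {c : ℕ} {z : ℝ × ℝ} (h : Phi c z = 0) (t : ℝ) :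
    Psi c (t, z) = 0 := by
  by_cases hb : |t| < π
  · rw [Psi_of_lt hb, h]
  · exact Psi_of_not_lt hb _

lemma heLetter_coe (j : ℕ) (b : Bool) (t : I) :
    ((heLetter (j, b) t : HEset) : ℝ × ℝ) =
      circlePt j (2*π*(if b then (t:ℝ) else 1 - (t:ℝ))) := by
  cases b
  · show (((xLoop j).symm t : HEset) : ℝ × ℝ) = _
    show ((xLoop j (unitInterval.symm t) : HEset) : ℝ × ℝ) = _
    show circlePt j (2*π*((unitInterval.symm t : I) : ℝ)) = _
    rw [unitInterval.coe_symm_eq]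
    simp
  · rfl

theorem letter_lift {c : ℕ} (hc : 2 ≤ c) (j : ℕ) (b : Bool) (m l : ℤ) :
    (∀ t : I,
      ((seg (2*π*(m:ℝ)) (2*π*((m + (if j = 1 then lsgn b else 0) : ℤ) : ℝ)) t : ℝ) : Real.Angle)
        = Phi 1 ((heLetter (j, b) t : HEset) : ℝ × ℝ)) ∧
    (∀ t : I,
      ((seg (2*π*(l:ℝ)) (2*π*((l + (if j = c ∧ m = 0 then lsgn b else 0) : ℤ) : ℝ)) t : ℝ) : Real.Angle)
        = Psi c ((seg (2*π*(m:ℝ)) (2*π*((m + (if j = 1 then lsgn b else 0) : ℤ) : ℝ)) t : ℝ),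
            ((heLetter (j, b) t : HEset) : ℝ × ℝ))) := by
  have hc1 : (1:ℕ) ≤ c := le_trans (by norm_num) hc
  have hc1' : (1:ℕ) ≠ c := by omega
  by_cases hj : j = 1
  · -- the letter moves on the first circle
    subst hj
    have hPhic : ∀ t : I, Phi c ((heLetter (1, b) t : HEset) : ℝ × ℝ) = 0 := by
      intro t
      rw [heLetter_coe]
      exact Phi_circlePt_ne hc1 (fun h => hc1' h) _
    constructor
    · intro t
      rw [heLetter_coe, Phi_circlePt_self (le_refl 1)]
      cases b
      · simp only [if_true, if_false, Bool.false_eq_true]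
        apply angle_coe_eq_of_sub (m - 1)
        rw [seg_apply]
        push_cast [lsgn_false]
        ring
      · simp only [if_true]
        apply angle_coe_eq_of_sub m
        rw [seg_apply]
        push_cast [lsgn_true]
        ring
    · intro t
      rw [Psi_of_Phi_zero (hPhic t)]
      apply angle_coe_eq_zero l
      rw [seg_apply]
      have h0 : (if (1:ℕ) = c ∧ m = 0 then lsgn b else 0) = 0 := by
        rw [if_neg]
        intro hand
        exact hc1' hand.1
      rw [h0]
      push_cast
      ring
  · -- the letter stays on circle j ≠ 1 : the first lift is constant
    have husegval : ∀ t : I,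
        seg (2*π*(m:ℝ)) (2*π*((m + (if j = 1 then lsgn b else 0) : ℤ) : ℝ)) t = 2*π*(m:ℝ) := by
      intro t
      rw [seg_apply, if_neg hj]
      push_cast
      ring
    have hPhi1 : ∀ t : I, Phi 1 ((heLetter (j, b) t : HEset) : ℝ × ℝ) = 0 := by
      intro t
      rw [heLetter_coe]
      exact Phi_circlePt_ne (le_refl 1) hj _
    refine ⟨fun t => ?_, fun t => ?_⟩
    · rw [hPhi1, husegval t]
      exact angle_coe_two_pi_int m
    · rw [husegval t]
      by_cases hm : m = 0
      · -- the lift is at level 0; the letter may count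
        subst hm
        have h00 : (2*π*((0:ℤ):ℝ)) = 0 := by push_cast; ring
        rw [h00]
        rw [Psi_of_lt (by rw [abs_zero]; exact Real.pi_pos)]
        by_cases hjc : j = c
        · subst hjc
          rw [heLetter_coe, Phi_circlePt_self hc1]
          have hcond : ((j:ℕ) = j ∧ (0:ℤ) = 0) := ⟨rfl, rfl⟩
          rw [if_pos hcond]
          cases b
          · simp only [Bool.false_eq_true, if_false]
            apply angle_coe_eq_of_sub (l - 1)
            rw [seg_apply]
            push_cast [lsgn_false]
            ring
          · simp only [if_true]
            apply angle_coe_eq_of_sub l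
            rw [seg_apply]
            push_cast [lsgn_true]
            ring
        · rw [heLetter_coe, Phi_circlePt_ne hc1 hjc]
          apply angle_coe_eq_zero l
          rw [seg_apply, if_neg (fun hand => hjc hand.1)]
          push_cast
          ring
      · -- the lift is away from level 0: nothing counts
        rw [Psi_of_not_lt (not_abs_two_pi_int_lt hm)]
        apply angle_coe_eq_zero l
        rw [seg_apply, if_neg (fun hand => hm hand.2)]
        push_cast
        ring

theorem word_lift {c : ℕ} (hc : 2 ≤ c) :
    ∀ (L : List (ℕ × Bool)) (m l : ℤ),
    ∃ (u : Path (2*π*(m:ℝ)) (2*π*((m + d1 L : ℤ) : ℝ)))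
      (v : Path (2*π*(l:ℝ)) (2*π*((l + cnt c L m : ℤ) : ℝ))),
      (∀ t, ((u t : ℝ) : Real.Angle) = Phi 1 ((wordLoop L t : HEset) : ℝ × ℝ)) ∧
      (∀ t, ((v t : ℝ) : Real.Angle) = Psi c (u t, ((wordLoop L t : HEset) : ℝ × ℝ))) := by
  have hc1 : (1:ℕ) ≤ c := le_trans (by norm_num) hc
  intro L
  induction L with
  | nil =>
    intro m l
    refine ⟨seg _ _, seg _ _, fun t => ?_, fun t => ?_⟩
    · have hval : seg (2*π*(m:ℝ)) (2*π*((m + d1 [] : ℤ) : ℝ)) t = 2*π*(m:ℝ) := by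
        rw [seg_apply]
        show 2*π*(m:ℝ) + (2*π*((m + 0 : ℤ) : ℝ) - 2*π*(m:ℝ)) * (t:ℝ) = _
        push_cast
        ring
      rw [hval]
      have : ((wordLoop [] t : HEset) : ℝ × ℝ) = ((0,0) : ℝ × ℝ) := rfl
      rw [this, Phi_origin 1 (le_refl 1)]
      exact angle_coe_two_pi_int m
    · have hval : seg (2*π*(l:ℝ)) (2*π*((l + cnt c [] m : ℤ) : ℝ)) t = 2*π*(l:ℝ) := by
        rw [seg_apply]
        show 2*π*(l:ℝ) + (2*π*((l + 0 : ℤ) : ℝ) - 2*π*(l:ℝ)) * (t:ℝ) = _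
        push_cast
        ring
      rw [hval]
      have : ((wordLoop [] t : HEset) : ℝ × ℝ) = ((0,0) : ℝ × ℝ) := rfl
      rw [this, Psi_origin hc1]
      exact angle_coe_two_pi_int l
  | cons a L ih =>
    obtain ⟨j, b⟩ := a
    intro m l
    set j1 : ℤ := if j = 1 then lsgn b else 0 with hj1
    set c1 : ℤ := if j = c ∧ m = 0 then lsgn b else 0 with hc1def
    obtain ⟨u', v', hu', hv'⟩ := ih (m + j1) (l + c1)
    obtain ⟨hA, hB⟩ := letter_lift hc j b m l
    rw [← hj1] at hA hB
    rw [← hc1def] at hB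
    have hd : (m + j1) + d1 L = m + d1 ((j, b) :: L) := by
      show _ = m + ((if j = 1 then lsgn b else 0) + d1 L)
      rw [← hj1]; ring
    have hct : (l + c1) + cnt c L (m + j1) = l + cnt c ((j, b) :: L) m := by
      show _ = l + ((if j = c ∧ m = 0 then lsgn b else 0) + cnt c L (m + (if j = 1 then lsgn b else 0)))
      rw [← hj1, ← hc1def]; ring
    have hdR : (2*π*((m + d1 ((j, b) :: L) : ℤ) : ℝ)) = (2*π*(((m + j1) + d1 L : ℤ) : ℝ)) := by
      rw [hd]
    have hctR : (2*π*((l + cnt c ((j, b) :: L) m : ℤ) : ℝ)) = (2*π*(((l + c1) + cnt c L (m + j1) : ℤ) : ℝ)) := by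
      rw [hct]
    refine ⟨((seg (2*π*(m:ℝ)) (2*π*((m + j1 : ℤ) : ℝ))).trans u').cast rfl hdR,
            ((seg (2*π*(l:ℝ)) (2*π*((l + c1 : ℤ) : ℝ))).trans v').cast rfl hctR,
            fun t => ?_, fun t => ?_⟩ <;>
    · rw [Path.cast_coe]
      have hwl : wordLoop ((j, b) :: L) = (heLetter (j, b)).trans (wordLoop L) := rfl
      rw [hwl]
      try rw [Path.cast_coe]
      rw [Path.trans_apply, Path.trans_apply]
      try rw [Path.trans_apply]
      split_ifs with h
      · first
        | exact hA _
        | exact hB _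
      · first
        | exact hu' _
        | exact hv' _

end Words
section Part2

open Real

lemma d1_append : ∀ L L' : List (ℕ × Bool), d1 (L ++ L') = d1 L + d1 L' := by
  intro L L'
  induction L with
  | nil => simp [d1]
  | cons a L ih =>
    obtain ⟨j, b⟩ := a
    show d1 ((j,b) :: (L ++ L')) = _
    rw [d1, d1, ih]
    ring

lemma cnt_append (c' : ℕ) : ∀ (L L' : List (ℕ × Bool)) (m : ℤ),
    cnt c' (L ++ L') m = cnt c' L m + cnt c' L' (m + d1 L) := by
  intro L
  induction L with
  | nil =>
    intro L' m
    show cnt c' L' m = cnt c' [] m + cnt c' L' (m + d1 [])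
    rw [cnt, d1, add_zero]
    ring
  | cons a L ih =>
    obtain ⟨j, b⟩ := a
    intro L' m
    show cnt c' ((j,b) :: (L ++ L')) m = cnt c' ((j,b) :: L) m + cnt c' L' (m + d1 ((j,b)::L))
    rw [cnt, cnt, d1, ih]
    have harg : m + (if j = 1 then lsgn b else 0) + d1 L
        = m + ((if j = 1 then lsgn b else 0) + d1 L) := by ring
    rw [harg]
    ring

lemma d1_flatten_replicate (B : List (ℕ × Bool)) (h : d1 B = 0) :
    ∀ N, d1 (List.replicate N B).flatten = 0 := by
  intro N
  induction N with
  | zero => rfl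
  | succ N ih =>
    rw [List.replicate_succ, List.flatten_cons, d1_append, h, ih]
    ring

lemma cnt_flatten_replicate (c' : ℕ) (B : List (ℕ × Bool)) (h : d1 B = 0) :
    ∀ N m, cnt c' (List.replicate N B).flatten m = N * cnt c' B m := by
  intro N
  induction N with
  | zero => intro m; show (0:ℤ) = _; simp
  | succ N ih =>
    intro m
    rw [List.replicate_succ, List.flatten_cons, cnt_append, h, add_zero, ih]
    push_cast
    ring

lemma d1_commWord {n k : ℕ} (hn : n ≠ 1) (hk : k ≠ 1) : d1 (commWord n k) = 0 := by
  show d1 ((n, true) :: (k, true) :: (n, false) :: (k, false) :: []) = 0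
  rw [d1, d1, d1, d1, d1, if_neg hn, if_neg hk, if_neg hn, if_neg hk]
  ring

lemma d1_commWord1 {k : ℕ} (hk : k ≠ 1) : d1 (commWord 1 k) = 0 := by
  show d1 ((1, true) :: (k, true) :: (1, false) :: (k, false) :: []) = 0
  rw [d1, d1, d1, d1, d1, if_pos rfl, if_neg hk, if_pos rfl, if_neg hk, lsgn_true, lsgn_false]
  ring

lemma cnt_commWord (c' : ℕ) {n k : ℕ} (hn : n ≠ 1) (hk : k ≠ 1) (m : ℤ) :
    cnt c' (commWord n k) m = 0 := by
  show cnt c' ((n, true) :: (k, true) :: (n, false) :: (k, false) :: []) m = 0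
  rw [cnt, cnt, cnt, cnt, cnt]
  simp only [if_neg hn, if_neg hk, add_zero, lsgn_true, lsgn_false]
  split_ifs <;> ring

lemma cnt_commWord1 {k : ℕ} (hk : k ≠ 1) : cnt k (commWord 1 k) 0 = -1 := by
  have h1k : (1:ℕ) ≠ k := fun h => hk h.symm
  show cnt k ((1, true) :: (k, true) :: (1, false) :: (k, false) :: []) 0 = -1
  rw [cnt, cnt, cnt, cnt, cnt]
  simp [h1k, hk, lsgn_true, lsgn_false]

theorem awLoop_liftpair {n k : ℕ} (hn : 2 ≤ n) (hk : 2 ≤ k) :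
    ∃ u v : I → ℝ, Continuous u ∧ Continuous v ∧ u 0 = 0 ∧ v 0 = 0 ∧
      (∀ t, ((u t : ℝ) : Real.Angle) =
        Phi 1 ((((aLoop n k).trans (wLoop n k)) t : HEset) : ℝ × ℝ)) ∧
      (∀ t, ((v t : ℝ) : Real.Angle) =
        Psi k (u t, ((((aLoop n k).trans (wLoop n k)) t : HEset) : ℝ × ℝ))) ∧
      v 1 = 2*π*(-(n:ℝ)) := by
  have hn1 : n ≠ 1 := by omega
  have hk1 : k ≠ 1 := by omega
  set A : List (ℕ × Bool) := (List.replicate (n + k) (commWord n k)).flatten with hA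
  set Wd : List (ℕ × Bool) := (List.replicate n (commWord 1 k)).flatten with hWd
  have hd1A : d1 A = 0 := d1_flatten_replicate _ (d1_commWord hn1 hk1) _
  have hcntA : cnt k A 0 = 0 := by
    rw [hA, cnt_flatten_replicate _ _ (d1_commWord hn1 hk1), cnt_commWord k hn1 hk1]
    ring
  have hcntW : cnt k Wd 0 = -(n:ℤ) := by
    rw [hWd, cnt_flatten_replicate _ _ (d1_commWord1 hk1), cnt_commWord1 hk1]
    ring
  obtain ⟨uA, vA, hA1, hA2⟩ := word_lift hk A 0 0
  obtain ⟨uW, vW, hW1, hW2⟩ := word_lift hk Wd 0 0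
  have hcastu : (2*π*(((0:ℤ) + d1 A : ℤ) : ℝ)) = (2*π*((0:ℤ) : ℝ)) := by
    rw [hd1A]; norm_num
  have hcastv : (2*π*(((0:ℤ) + cnt k A 0 : ℤ) : ℝ)) = (2*π*((0:ℤ) : ℝ)) := by
    rw [hcntA]; norm_num
  set uW' := uW.cast hcastu rfl with huW'
  set vW' := vW.cast hcastv rfl with hvW'
  set u := uA.trans uW' with hu
  set v := vA.trans vW' with hv
  have haw : (aLoop n k).trans (wLoop n k) = (wordLoop A).trans (wordLoop Wd) := rfl
  refine ⟨u, v, u.continuous, v.continuous, ?_, ?_, ?_, ?_, ?_⟩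
  · show u 0 = 0
    rw [u.source]
    push_cast
    ring
  · show v 0 = 0
    rw [v.source]
    push_cast
    ring
  · intro t
    rw [haw, hu, Path.trans_apply, Path.trans_apply]
    split_ifs with h
    · exact hA1 _
    · rw [huW', Path.cast_coe]
      exact hW1 _
  · intro t
    rw [haw, hu, hv, Path.trans_apply, Path.trans_apply, Path.trans_apply]
    split_ifs with h
    · exact hA2 _
    · rw [huW', hvW', Path.cast_coe, Path.cast_coe]
      exact hW2 _
  · show v 1 = _
    rw [hv]
    have := (vW' : Path _ _).target
    rw [Path.trans_apply]
    rw [dif_neg (by norm_num : ¬ ((1:I) : ℝ) ≤ 1/2)]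
    have h1 : (⟨2 * ((1:I):ℝ) - 1, by norm_num⟩ : I) = (1 : I) := by
      apply Subtype.ext
      show 2 * ((1:I):ℝ) - 1 = 1
      norm_num
    rw [h1]
    show vW' 1 = _
    rw [vW'.target, hcntW]
    push_cast
    ring

theorem reflrefl_trans_apply (t : I) :
    ((((Path.refl hep).trans (Path.refl hep)) t : HEset) : ℝ × ℝ) = ((0,0) : ℝ × ℝ) := by
  rw [Path.trans_apply]
  split_ifs <;> rfl

/-- Part 2 : `([P],[P])` is not in `M⁻¹(A)`. -/
theorem part2_notmem :
    ((⟦Path.refl hep⟧, ⟦Path.refl hep⟧) : piHE × piHE) ∉ piMul ⁻¹' Aset := by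
  rintro ⟨n, k, hn, hk, heq⟩
  have h1 : (⟦(Path.refl hep).trans (Path.refl hep)⟧ : piHE)
      = ⟦(aLoop n k).trans (wLoop n k)⟧ := by
    have h2 : Path.Homotopic.Quotient.trans (⟦Path.refl hep⟧ : piHE) ⟦Path.refl hep⟧
        = Path.Homotopic.Quotient.trans ⟦aLoop n k⟧ ⟦wLoop n k⟧ := heq
    exact h2
  have hhom : ((Path.refl hep).trans (Path.refl hep)).Homotopic
      ((aLoop n k).trans (wLoop n k)) := Quotient.exact h1
  obtain ⟨u, v, huc, hvc, hu0, hv0, hu, hv, hv1⟩ := awLoop_liftpair hn hk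
  have hinv := liftpair_invariant hk hhom
    (u₀ := fun _ => (0:ℝ)) (v₀ := fun _ => (0:ℝ)) (u₁ := u) (v₁ := v)
    continuous_const continuous_const huc hvc rfl rfl hu0 hv0
    (fun t => by
      rw [reflrefl_trans_apply, Phi_origin 1 (le_refl 1), Real.Angle.coe_zero])
    (fun t => by
      rw [reflrefl_trans_apply, Psi_origin (by omega : 1 ≤ k), Real.Angle.coe_zero])
    hu hv
  rw [hv1] at hinv
  have h0 : (0:ℝ) = 2*π*(-(n:ℝ)) := hinv
  have hπ : (0:ℝ) < π := Real.pi_pos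
  have hn' : (2:ℝ) ≤ (n:ℝ) := by exact_mod_cast hn
  nlinarith [hπ, h0, hn']

end Part2
section Part1

open Real

lemma xLoop_zero_eq : xLoop 0 = Path.refl hep := by
  apply Path.ext
  funext t
  show (⟨circlePt 0 (2*π*(t:ℝ)), _⟩ : HEset) = hep
  apply Subtype.ext
  show circlePt 0 (2*π*(t:ℝ)) = ((0,0) : ℝ × ℝ)
  exact circlePt_zero_eq _

lemma heLetter_zero (b : Bool) : heLetter (0, b) = Path.refl hep := by
  cases b
  · show (xLoop 0).symm = Path.refl hep
    rw [xLoop_zero_eq, Path.refl_symm]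
  · show xLoop 0 = Path.refl hep
    exact xLoop_zero_eq

lemma q_reflTrans (δ : Path hep hep) :
    (⟦(Path.refl hep).trans δ⟧ : piHE) = ⟦δ⟧ :=
  Quotient.sound ⟨Path.Homotopy.reflTrans δ⟩

lemma q_assoc (p q r : Path hep hep) :
    (⟦(p.trans q).trans r⟧ : piHE) = ⟦p.trans (q.trans r)⟧ :=
  Quotient.sound ⟨Path.Homotopy.transAssoc p q r⟩

lemma q_transSymm (p : Path hep hep) :
    (⟦p.trans p.symm⟧ : piHE) = ⟦Path.refl hep⟧ :=
  Quotient.sound ⟨(Path.Homotopy.reflTransSymm p).symm⟩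

lemma q_congr (p : Path hep hep) {a b : Path hep hep} (h : (⟦a⟧ : piHE) = ⟦b⟧) :
    (⟦p.trans a⟧ : piHE) = ⟦p.trans b⟧ :=
  Quotient.sound (Path.Homotopic.hcomp (Path.Homotopic.refl p) (Quotient.exact h))

lemma q_congr_left {a b : Path hep hep} (h : (⟦a⟧ : piHE) = ⟦b⟧) (r : Path hep hep) :
    (⟦a.trans r⟧ : piHE) = ⟦b.trans r⟧ :=
  Quotient.sound (Path.Homotopic.hcomp (Quotient.exact h) (Path.Homotopic.refl r))

lemma q_block (L : List (ℕ × Bool)) :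
    (⟦wordLoop (commWord 1 0 ++ L)⟧ : piHE) = ⟦wordLoop L⟧ := by
  have h1 : wordLoop (commWord 1 0 ++ L) =
      (heLetter (1, true)).trans ((heLetter (0, true)).trans
        ((heLetter (1, false)).trans ((heLetter (0, false)).trans (wordLoop L)))) := rfl
  have h2 : heLetter (1, false) = (xLoop 1).symm := rfl
  have h3 : heLetter (1, true) = xLoop 1 := rfl
  rw [h1, h2, h3, heLetter_zero, heLetter_zero]
  set W := wordLoop L with hW
  set x := xLoop 1 with hx
  calc (⟦x.trans ((Path.refl hep).trans (x.symm.trans ((Path.refl hep).trans W)))⟧ : piHE)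
      = ⟦x.trans (x.symm.trans ((Path.refl hep).trans W))⟧ := q_congr x (q_reflTrans _)
    _ = ⟦x.trans (x.symm.trans W)⟧ := q_congr x (q_congr x.symm (q_reflTrans _))
    _ = ⟦(x.trans x.symm).trans W⟧ := (q_assoc _ _ _).symm
    _ = ⟦(Path.refl hep).trans W⟧ := q_congr_left (q_transSymm x) W
    _ = ⟦W⟧ := q_reflTrans W

lemma gword_null : ∀ n : ℕ,
    (⟦wordLoop ((List.replicate n (commWord 1 0)).flatten)⟧ : piHE) = ⟦Path.refl hep⟧ := by
  intro n
  induction n with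
  | zero => rfl
  | succ n ih =>
    rw [List.replicate_succ, List.flatten_cons, q_block, ih]

lemma wordLoop_dist_origin {B : ℝ} (hB : 0 ≤ B) :
    ∀ L : List (ℕ × Bool), (∀ l ∈ L, 1 ≤ l.1 ∧ 2/((l.1 : ℕ) : ℝ) ≤ B) →
    ∀ t : I, dist ((wordLoop L t : HEset) : ℝ × ℝ) ((0,0) : ℝ × ℝ) ≤ B := by
  intro L
  induction L with
  | nil =>
    intro _ t
    have : ((wordLoop [] t : HEset) : ℝ × ℝ) = ((0,0) : ℝ × ℝ) := rfl
    rw [this, dist_self]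
    exact hB
  | cons a L ih =>
    obtain ⟨j, b⟩ := a
    intro hl t
    have hwl : wordLoop ((j, b) :: L) = (heLetter (j, b)).trans (wordLoop L) := rfl
    rw [hwl, Path.trans_apply]
    split_ifs with h
    · obtain ⟨hj1, hjB⟩ := hl (j, b) List.mem_cons_self
      have := heLetter_coe j b ⟨2 * (t:ℝ), by constructor <;> [linarith [t.2.1]; linarith [h]]⟩
      rw [this]
      calc dist (circlePt j _) ((0,0) : ℝ × ℝ) ≤ 2/((j:ℕ):ℝ) :=
            dist_origin_le hj1 (circlePt_mem_heCircle j _)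
        _ ≤ B := hjB
    · exact ih (fun l hmem => hl l (List.mem_cons_of_mem _ hmem)) _

lemma wordLoop_subst_dist {k : ℕ} (hk : 1 ≤ k) :
    ∀ L : List (ℕ × Bool), ∀ t : I,
      dist ((wordLoop (L.map (fun l => if l.1 = k then (0, l.2) else l)) t : HEset) : ℝ × ℝ)
        ((wordLoop L t : HEset) : ℝ × ℝ) ≤ 2/(k:ℝ) := by
  have h2k : (0:ℝ) ≤ 2/(k:ℝ) := by positivity
  intro L
  induction L with
  | nil =>
    intro t
    simp only [List.map_nil]
    rw [dist_self]
    exact h2k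
  | cons a L ih =>
    obtain ⟨j, b⟩ := a
    intro t
    rw [List.map_cons]
    by_cases hj : j = k
    · have hsub : (if ((j, b) : ℕ × Bool).1 = k then ((0:ℕ), ((j, b) : ℕ × Bool).2) else (j, b))
          = ((0:ℕ), b) := by simp [hj]
      rw [hsub]
      have hwl1 : wordLoop (((0:ℕ), b) :: L.map (fun l => if l.1 = k then ((0:ℕ), l.2) else l))
          = (heLetter ((0:ℕ), b)).trans
              (wordLoop (L.map (fun l => if l.1 = k then ((0:ℕ), l.2) else l))) := rfl
      have hwl2 : wordLoop ((j, b) :: L) = (heLetter (j, b)).trans (wordLoop L) := rfl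
      rw [hwl1, hwl2, Path.trans_apply, Path.trans_apply]
      split_ifs with h
      · rw [heLetter_coe, heLetter_coe, circlePt_zero_eq, dist_comm, hj]
        exact dist_origin_le hk (circlePt_mem_heCircle k _)
      · exact ih _
    · have hsub : (if ((j, b) : ℕ × Bool).1 = k then ((0:ℕ), ((j, b) : ℕ × Bool).2) else (j, b))
          = (j, b) := by simp [hj]
      rw [hsub]
      have hwl1 : wordLoop ((j, b) :: L.map (fun l => if l.1 = k then ((0:ℕ), l.2) else l))
          = (heLetter (j, b)).trans
              (wordLoop (L.map (fun l => if l.1 = k then ((0:ℕ), l.2) else l))) := rfl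
      have hwl2 : wordLoop ((j, b) :: L) = (heLetter (j, b)).trans (wordLoop L) := rfl
      rw [hwl1, hwl2, Path.trans_apply, Path.trans_apply]
      split_ifs with h
      · rw [dist_self]
        exact h2k
      · exact ih _

lemma exists_eps {U : Set piHE} (hU : IsOpen U) {f : Path hep hep}
    (hf : (⟦f⟧ : piHE) ∈ U) :
    ∃ ε > 0, ∀ g : Path hep hep,
      (∀ t : I, dist ((g t : HEset) : ℝ × ℝ) ((f t : HEset) : ℝ × ℝ) < ε) →
      (⟦g⟧ : piHE) ∈ U := by
  have hcont : Continuous (fun p : Path hep hep => (⟦p⟧ : piHE)) := continuous_quotient_mk'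
  have hq : IsOpen ((fun p : Path hep hep => (⟦p⟧ : piHE)) ⁻¹' U) := hU.preimage hcont
  obtain ⟨O, hO, hOeq⟩ := isOpen_induced_iff.1 hq
  have hfO : (f : C(I, HEset)) ∈ O := by
    have : f ∈ (fun p : Path hep hep => (⟦p⟧ : piHE)) ⁻¹' U := hf
    rw [← hOeq] at this
    exact this
  obtain ⟨ε, hε, hball⟩ := Metric.isOpen_iff.1 hO _ hfO
  refine ⟨ε, hε, fun g hg => ?_⟩
  have hgO : (g : C(I, HEset)) ∈ O := by
    apply hball
    rw [Metric.mem_ball]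
    rw [ContinuousMap.dist_lt_iff_of_nonempty]
    intro t
    show dist (g t) (f t) < ε
    rw [Subtype.dist_eq]
    exact hg t
  have : g ∈ (fun p : Path hep hep => (⟦p⟧ : piHE)) ⁻¹' U := by
    rw [← hOeq]
    exact hgO
  exact this

theorem part1_closure :
    ((⟦Path.refl hep⟧, ⟦Path.refl hep⟧) : piHE × piHE) ∈ closure (piMul ⁻¹' Aset) := by
  refine mem_closure_iff.mpr ?_
  intro O hO hmem
  obtain ⟨U, V, hU, hV, hmemU, hmemV, hsub⟩ := isOpen_prod_iff.1 hO _ _ hmem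
  obtain ⟨ε₁, hε₁, hUball⟩ := exists_eps hU hmemU
  obtain ⟨n₀, hn₀⟩ := exists_nat_gt (2/ε₁)
  set n := max n₀ 2 with hn
  have hn2 : 2 ≤ n := le_max_right _ _
  have hnpos : (0:ℝ) < n := by
    have : (2:ℕ) ≤ n := hn2
    have : (2:ℝ) ≤ (n:ℝ) := by exact_mod_cast this
    linarith
  have h2n : 2/(n:ℝ) < ε₁ := by
    have h1 : (n₀:ℝ) ≤ (n:ℝ) := by exact_mod_cast le_max_left n₀ 2
    have h2 : 2/ε₁ < (n:ℝ) := lt_of_lt_of_le hn₀ h1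
    rw [div_lt_iff₀ hnpos]
    rw [div_lt_iff₀ hε₁] at h2
    nlinarith
  have hgV : (⟦wordLoop ((List.replicate n (commWord 1 0)).flatten)⟧ : piHE) ∈ V := by
    rw [gword_null n]
    exact hmemV
  obtain ⟨ε₂, hε₂, hVball⟩ := exists_eps hV hgV
  obtain ⟨k₀, hk₀⟩ := exists_nat_gt (2/ε₂)
  set k := max (max k₀ 2) n with hk
  have hk2 : 2 ≤ k := le_trans (le_max_right k₀ 2) (le_trans (le_max_left _ n) (le_refl _))
  have hkn : n ≤ k := le_max_right _ _
  have hkpos : (0:ℝ) < k := by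
    have : (2:ℕ) ≤ k := hk2
    have : (2:ℝ) ≤ (k:ℝ) := by exact_mod_cast this
    linarith
  have h2k : 2/(k:ℝ) < ε₂ := by
    have h1 : (k₀:ℝ) ≤ (k:ℝ) := by
      exact_mod_cast le_trans (le_max_left k₀ 2) (le_max_left _ n)
    have h2 : 2/ε₂ < (k:ℝ) := lt_of_lt_of_le hk₀ h1
    rw [div_lt_iff₀ hkpos]
    rw [div_lt_iff₀ hε₂] at h2
    nlinarith
  have hkn' : 2/(k:ℝ) ≤ 2/(n:ℝ) := by
    apply div_le_div_of_nonneg_left (by norm_num) hnpos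
    exact_mod_cast hkn
  -- the a-loop lies in U
  have haU : (⟦aLoop n k⟧ : piHE) ∈ U := by
    apply hUball
    intro t
    have hbound : dist ((aLoop n k t : HEset) : ℝ × ℝ) ((0,0) : ℝ × ℝ) ≤ 2/(n:ℝ) := by
      apply wordLoop_dist_origin (by positivity)
      intro l hl
      obtain ⟨b', hb', hlb⟩ := List.mem_flatten.1 hl
      have hbB : b' = commWord n k := List.eq_of_mem_replicate hb'
      rw [hbB] at hlb
      have : l.1 = n ∨ l.1 = k := by
        simp only [commWord, List.mem_cons, List.not_mem_nil, or_false] at hlb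
        rcases hlb with rfl | rfl | rfl | rfl
        · left; rfl
        · right; rfl
        · left; rfl
        · right; rfl
      rcases this with h | h
      · rw [h]
        exact ⟨by omega, le_refl _⟩
      · rw [h]
        exact ⟨by omega, hkn'⟩
    have hrefl : (((Path.refl hep) t : HEset) : ℝ × ℝ) = ((0,0) : ℝ × ℝ) := rfl
    rw [hrefl]
    exact lt_of_le_of_lt hbound h2n
  -- the w-loop lies in V
  have hwV : (⟦wLoop n k⟧ : piHE) ∈ V := by
    apply hVball
    intro t
    have hmap : ((List.replicate n (commWord 1 k)).flatten).map
        (fun l => if l.1 = k then ((0:ℕ), l.2) else l)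
          = (List.replicate n (commWord 1 0)).flatten := by
      rw [List.map_flatten, List.map_replicate]
      congr 2
      have h1k : (1:ℕ) ≠ k := by omega
      simp [commWord, h1k]
    have := wordLoop_subst_dist (by omega : 1 ≤ k) ((List.replicate n (commWord 1 k)).flatten) t
    rw [hmap] at this
    rw [dist_comm] at this
    exact lt_of_le_of_lt this h2k
  refine ⟨(⟦aLoop n k⟧, ⟦wLoop n k⟧), hsub ⟨haU, hwV⟩, ⟨n, k, hn2, hk2, rfl⟩⟩

end Part1


/-- `M⁻¹(A)` is not closed in `π₁(HE,p) × π₁(HE,p)`: the point `([P],[P])` lies in the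
closure of `M⁻¹(A)` but not in `M⁻¹(A)`. -/
theorem preimage_Aset_not_closed :
    ((⟦Path.refl hep⟧, ⟦Path.refl hep⟧) : piHE × piHE) ∈ closure (piMul ⁻¹' Aset) ∧
    ((⟦Path.refl hep⟧, ⟦Path.refl hep⟧) : piHE × piHE) ∉ piMul ⁻¹' Aset ∧
    ¬ IsClosed (piMul ⁻¹' Aset) := by
  refine ⟨part1_closure, part2_notmem, fun hcl => ?_⟩
  exact part2_notmem (hcl.closure_eq ▸ part1_closure)

end
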